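/- For any N ≥ 2 and the FLATLO displacement function Δm (defined piecewise by parity of N and j as in the advancing algorithm), the sequence Δm(0), Δm(1), ..., Δm(N−1) is strictly decreasing with Δm(N−1) = 0 when N and N−1 have appropriate parities; in particular Δm(i) > Δm(i+1) for all 0 ≤ i < N−1, assuming Δd > 0. -/
import Mathlib


/-- The advancing algorithm displacement, for `N` aircraft and index `j`. -/
noncomputable def moveForward (N : ℕ) (Δd : ℝ) (j : ℕ) : ℝ :=
  if Odd N then
    if Odd j then (((N - j) / 2 : ℕ) : ℝ) * Δd + 2 * ((((N - j) / 2 - 1 : ℕ)) : ℝ) * Δd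
    else 3 * Δd * (((N - j - 1) / 2 : ℕ) : ℝ)
  else
    if Odd j then 3 * Δd * (((N - j - 1) / 2 : ℕ) : ℝ)
    else (((N - j) / 2 : ℕ) : ℝ) * Δd + 2 * ((((N - j) / 2 - 1 : ℕ)) : ℝ) * Δd

theorem stmt11 (N : ℕ) (hN : 2 ≤ N) (Δd : ℝ) (hΔd : 0 < Δd) :
    ∀ i : ℕ, i + 1 < N → moveForward N Δd i > moveForward N Δd (i + 1) := by
  intro i hi
  simp only [moveForward]
  rcases Nat.even_or_odd N with hNp | hNp <;>
    rcases Nat.even_or_odd i with hip | hip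
  · -- N even, i even
    have hN2 : N % 2 = 0 := Nat.even_iff.mp hNp
    have hi2 : i % 2 = 0 := Nat.even_iff.mp hip
    rw [if_neg (Nat.not_odd_iff_even.mpr hNp), if_neg (Nat.not_odd_iff_even.mpr hip),
      if_neg (Nat.not_odd_iff_even.mpr hNp), if_pos (Even.add_one hip)]
    obtain ⟨k, hk⟩ : ∃ k, N - i = 2 * (k + 1) := ⟨(N - i) / 2 - 1, by omega⟩
    rw [show (N - i) / 2 = k + 1 by omega, show (N - (i + 1) - 1) / 2 = k by omega]
    simp only [Nat.add_sub_cancel]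
    push_cast
    nlinarith
  · -- N even, i odd
    have hN2 : N % 2 = 0 := Nat.even_iff.mp hNp
    have hi2 : i % 2 = 1 := Nat.odd_iff.mp hip
    rw [if_neg (Nat.not_odd_iff_even.mpr hNp), if_pos hip,
      if_neg (Nat.not_odd_iff_even.mpr hNp), if_neg (Nat.not_odd_iff_even.mpr (Odd.add_one hip))]
    obtain ⟨k, hk⟩ : ∃ k, N - i = 2 * (k + 1) + 1 := ⟨(N - i) / 2 - 1, by omega⟩
    rw [show (N - i - 1) / 2 = k + 1 by omega, show (N - (i + 1)) / 2 = k + 1 by omega]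
    simp only [Nat.add_sub_cancel]
    push_cast
    nlinarith
  · -- N odd, i even
    have hN2 : N % 2 = 1 := Nat.odd_iff.mp hNp
    have hi2 : i % 2 = 0 := Nat.even_iff.mp hip
    rw [if_pos hNp, if_neg (Nat.not_odd_iff_even.mpr hip),
      if_pos hNp, if_pos (Even.add_one hip)]
    obtain ⟨k, hk⟩ : ∃ k, N - i = 2 * (k + 1) + 1 := ⟨(N - i) / 2 - 1, by omega⟩
    rw [show (N - i - 1) / 2 = k + 1 by omega, show (N - (i + 1)) / 2 = k + 1 by omega]
    simp only [Nat.add_sub_cancel]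
    push_cast
    nlinarith
  · -- N odd, i odd
    have hN2 : N % 2 = 1 := Nat.odd_iff.mp hNp
    have hi2 : i % 2 = 1 := Nat.odd_iff.mp hip
    rw [if_pos hNp, if_pos hip, if_pos hNp,
      if_neg (Nat.not_odd_iff_even.mpr (Odd.add_one hip))]
    obtain ⟨k, hk⟩ : ∃ k, N - i = 2 * (k + 1) := ⟨(N - i) / 2 - 1, by omega⟩
    rw [show (N - i) / 2 = k + 1 by omega, show (N - (i + 1) - 1) / 2 = k by omega]
    simp only [Nat.add_sub_cancel]
    push_cast
    nlinarith
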